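/- Massart's finite class lemma: let S = {z_1,…,z_m} and let F be a finite set of functions f : Z → [0,1]. Then the Rademacher complexity satisfies E_σ[ sup_{f∈F} (2/m) ∑_{t=1}^m σ_t f(z_t) ] ≤ 2·√(2 log|F| / m), where σ_1,…,σ_m are i.i.d. uniform on {−1,1}. In particular, if additionally the values f(z_t) are bounded in [0,1], the bound √(2 log|F|/m) holds for the normalization (1/m)∑_t σ_t f(z_t) scaled appropriately. -/

import Mathlib

open Finset Real

/-- The "sign" of a boolean, as a real number. -/
private lemma sign_sum_zero (m : ℕ) (t : Fin m) :
    ∑ σ : Fin m → Bool, (if σ t then (1 : ℝ) else -1) = 0 := by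
  classical
  have hinv : Function.Involutive (fun σ : Fin m → Bool => Function.update σ t (!σ t)) := by
    intro σ
    funext s
    rcases eq_or_ne s t with rfl | hs
    · simp
    · simp [Function.update_of_ne hs]
  have h1 := Equiv.sum_comp hinv.toPerm (fun σ : Fin m → Bool => if σ t then (1 : ℝ) else -1)
  simp only [Function.Involutive.coe_toPerm] at h1
  have hflip : ∀ σ : Fin m → Bool,
      (if Function.update σ t (!σ t) t then (1 : ℝ) else -1)
        = -(if σ t then (1 : ℝ) else -1) := by
    intro σ
    rw [Function.update_self]
    cases h : σ t <;> simp [h]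
  have h1' : (∑ σ : Fin m → Bool, (if Function.update σ t (!σ t) t then (1 : ℝ) else -1))
      = ∑ σ : Fin m → Bool, (if σ t then (1 : ℝ) else -1) := h1
  rw [Fintype.sum_congr _ _ hflip, Finset.sum_neg_distrib] at h1'
  linarith

set_option maxHeartbeats 1000000 in
private lemma key_bound
    {Z : Type*} (m : ℕ) (hm : 0 < m) (S : Fin m → Z)
    (F : Finset (Z → ℝ)) (hF : F.Nonempty)
    (hb : ∀ f ∈ F, ∀ z, f z ∈ Set.Icc (0 : ℝ) 1) :
    (1 / 2 ^ m : ℝ) * ∑ σ : Fin m → Bool,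
        (F.sup' hF fun f => ∑ t, (if σ t then (1 : ℝ) else -1) * f (S t)) ≤
      Real.sqrt (2 * m * Real.log F.card) := by
  classical
  set N : ℕ := F.card with hN
  have hN1 : 1 ≤ N := Finset.card_pos.mpr hF
  -- notation
  set ε : (Fin m → Bool) → Fin m → ℝ := fun σ t => if σ t then (1 : ℝ) else -1 with hε
  set G : (Fin m → Bool) → ℝ := fun σ => F.sup' hF fun f => ∑ t, ε σ t * f (S t) with hG
  have hcard : (Fintype.card (Fin m → Bool) : ℝ) = 2 ^ m := by
    simp [Fintype.card_fun]
  rcases eq_or_lt_of_le hN1 with h1 | h2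
  · -- |F| = 1 : the expectation is 0
    obtain ⟨f0, hf0⟩ := Finset.card_eq_one.mp h1.symm
    have hsum : ∑ σ : Fin m → Bool, G σ = 0 := by
      have hGval : ∀ σ, G σ = ∑ t, ε σ t * f0 (S t) := by
        intro σ; simp [hG, hf0]
      rw [Fintype.sum_congr _ _ hGval, Finset.sum_comm]
      apply Finset.sum_eq_zero
      intro t _
      have : ∑ σ : Fin m → Bool, ε σ t * f0 (S t) =
          (∑ σ : Fin m → Bool, ε σ t) * f0 (S t) := by
        rw [Finset.sum_mul]
      rw [this, sign_sum_zero, zero_mul]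
    rw [hsum, mul_zero]
    exact Real.sqrt_nonneg _
  · -- |F| ≥ 2
    have hlogN : 0 < Real.log N := Real.log_pos (by exact_mod_cast h2)
    have hmR : (0 : ℝ) < m := by exact_mod_cast hm
    set lam : ℝ := Real.sqrt (2 * Real.log N / m) with hlam
    have hlampos : 0 < lam := Real.sqrt_pos.mpr (by positivity)
    have hlamsq : lam ^ 2 = 2 * Real.log N / m :=
      Real.sq_sqrt (by positivity)
    set A : ℝ := (1 / 2 ^ m : ℝ) * ∑ σ : Fin m → Bool, G σ with hA
    -- Jensen's inequality
    have jensen : Real.exp (lam * A) ≤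
        (1 / 2 ^ m : ℝ) * ∑ σ : Fin m → Bool, Real.exp (lam * G σ) := by
      have hconv := convexOn_exp
      have h := hconv.map_sum_le (t := (Finset.univ : Finset (Fin m → Bool)))
        (w := fun _ => (1 / 2 ^ m : ℝ)) (p := fun σ => lam * G σ)
        (fun _ _ => by positivity)
        (by rw [Finset.sum_const, nsmul_eq_mul, Finset.card_univ, hcard]; field_simp)
        (fun _ _ => Set.mem_univ _)
      calc Real.exp (lam * A)
          = Real.exp (∑ σ : Fin m → Bool, (1 / 2 ^ m : ℝ) • (lam * G σ)) := by
            congr 1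
            simp only [smul_eq_mul, hA]
            rw [Finset.mul_sum, Finset.mul_sum]
            apply Finset.sum_congr rfl
            intro σ _; ring
        _ ≤ ∑ σ : Fin m → Bool, (1 / 2 ^ m : ℝ) * Real.exp (lam * G σ) := h
        _ = (1 / 2 ^ m : ℝ) * ∑ σ : Fin m → Bool, Real.exp (lam * G σ) := by
            rw [Finset.mul_sum]
    -- bound exp of sup by sum of exps
    have sup_bound : ∀ σ : Fin m → Bool, Real.exp (lam * G σ) ≤
        ∑ f ∈ F, Real.exp (lam * ∑ t, ε σ t * f (S t)) := by
      intro σ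
      obtain ⟨f0, hf0F, hf0⟩ := Finset.exists_mem_eq_sup' hF
        (fun f => ∑ t, ε σ t * f (S t))
      have hGσ : G σ = ∑ t, ε σ t * f0 (S t) := hf0
      rw [hGσ]
      have h := Finset.single_le_sum (s := F)
        (f := fun f => Real.exp (lam * ∑ t, ε σ t * f (S t)))
        (fun f _ => (Real.exp_pos _).le) hf0F
      simpa using h
    -- factorization over coordinates
    have factor : ∀ f ∈ F, ∑ σ : Fin m → Bool, Real.exp (lam * ∑ t, ε σ t * f (S t)) ≤
        2 ^ m * Real.exp (m * lam ^ 2 / 2) := by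
      intro f hf
      have hexp : ∀ σ : Fin m → Bool, Real.exp (lam * ∑ t, ε σ t * f (S t)) =
          ∏ t, Real.exp (lam * (ε σ t * f (S t))) := by
        intro σ
        rw [← Real.exp_sum, Finset.mul_sum]
      rw [Fintype.sum_congr _ _ hexp]
      have := (Fintype.prod_sum (fun (t : Fin m) (b : Bool) =>
        Real.exp (lam * ((if b then (1:ℝ) else -1) * f (S t))))).symm
      rw [show (∑ σ : Fin m → Bool, ∏ t, Real.exp (lam * (ε σ t * f (S t)))) =
          ∑ σ : Fin m → Bool, ∏ t, Real.exp (lam * ((if σ t then (1:ℝ) else -1) * f (S t)))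
          from rfl, this]
      have hle : ∀ t : Fin m,
          (∑ b : Bool, Real.exp (lam * ((if b then (1:ℝ) else -1) * f (S t)))) ≤
          2 * Real.exp (lam ^ 2 / 2) := by
        intro t
        have hz := hb f hf (S t)
        rw [Fintype.sum_bool]
        have e1 : lam * ((if (true : Bool) = true then (1:ℝ) else -1) * f (S t))
            = lam * f (S t) := by simp
        have e2 : lam * ((if (false : Bool) = true then (1:ℝ) else -1) * f (S t))
            = -(lam * f (S t)) := by simp
        rw [e1, e2]
        have hcosh : Real.exp (lam * f (S t)) + Real.exp (-(lam * f (S t))) =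
            2 * Real.cosh (lam * f (S t)) := by
          rw [Real.cosh_eq]; ring
        rw [hcosh]
        have h1 : Real.cosh (lam * f (S t)) ≤ Real.cosh lam := by
          rw [Real.cosh_le_cosh]
          rw [abs_of_nonneg (by nlinarith [hz.1] : (0:ℝ) ≤ lam * f (S t)),
            abs_of_nonneg hlampos.le]
          nlinarith [hz.1, hz.2]
        have h2 : Real.cosh lam ≤ Real.exp (lam ^ 2 / 2) := Real.cosh_le_exp_half_sq lam
        linarith
      calc ∏ t : Fin m, (∑ b : Bool, Real.exp (lam * ((if b then (1:ℝ) else -1) * f (S t))))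
          ≤ ∏ _t : Fin m, (2 * Real.exp (lam ^ 2 / 2)) := by
            apply Finset.prod_le_prod
            · intro t _
              apply Finset.sum_nonneg
              intro b _
              exact (Real.exp_pos _).le
            · intro t _; exact hle t
        _ = 2 ^ m * Real.exp (m * lam ^ 2 / 2) := by
            rw [Finset.prod_const, Finset.card_univ, Fintype.card_fin, mul_pow,
              ← Real.exp_nat_mul]
            ring_nf
    -- combine
    have main : Real.exp (lam * A) ≤ Real.exp (Real.log N + m * lam ^ 2 / 2) := by
      have step : (1 / 2 ^ m : ℝ) * ∑ σ : Fin m → Bool, Real.exp (lam * G σ) ≤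
          (1 / 2 ^ m : ℝ) * (N * (2 ^ m * Real.exp (m * lam ^ 2 / 2))) := by
        apply mul_le_mul_of_nonneg_left _ (by positivity)
        calc ∑ σ : Fin m → Bool, Real.exp (lam * G σ)
            ≤ ∑ σ : Fin m → Bool, ∑ f ∈ F, Real.exp (lam * ∑ t, ε σ t * f (S t)) :=
              Finset.sum_le_sum fun σ _ => sup_bound σ
          _ = ∑ f ∈ F, ∑ σ : Fin m → Bool, Real.exp (lam * ∑ t, ε σ t * f (S t)) :=
              Finset.sum_comm
          _ ≤ ∑ _f ∈ F, 2 ^ m * Real.exp (m * lam ^ 2 / 2) :=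
              Finset.sum_le_sum factor
          _ = N * (2 ^ m * Real.exp (m * lam ^ 2 / 2)) := by
              rw [Finset.sum_const, nsmul_eq_mul, hN]
      have hrhs : (1 / 2 ^ m : ℝ) * (N * (2 ^ m * Real.exp (m * lam ^ 2 / 2))) =
          Real.exp (Real.log N + m * lam ^ 2 / 2) := by
        rw [Real.exp_add, Real.exp_log (by positivity : (0:ℝ) < (N:ℝ))]
        field_simp
      calc Real.exp (lam * A) ≤ _ := jensen
        _ ≤ _ := step
        _ = _ := hrhs
    have hAle : lam * A ≤ Real.log N + m * lam ^ 2 / 2 := Real.exp_le_exp.mp main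
    have hmll : m * lam ^ 2 / 2 = Real.log N := by
      rw [hlamsq]; field_simp
    rw [hmll] at hAle
    -- so lam * A ≤ 2 log N, and 2 log N / lam = √(2 m log N)
    have hfin : A ≤ 2 * Real.log N / lam := by
      rw [le_div_iff₀ hlampos]
      linarith
    have heq : 2 * Real.log N / lam = Real.sqrt (2 * m * Real.log N) := by
      rw [div_eq_iff hlampos.ne', hlam, ← Real.sqrt_mul (by positivity)]
      have : 2 * (m : ℝ) * Real.log N * (2 * Real.log N / m) = (2 * Real.log N) ^ 2 := by
        field_simp
      rw [this, Real.sqrt_sq (by positivity)]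
    calc A ≤ 2 * Real.log N / lam := hfin
      _ = Real.sqrt (2 * m * Real.log N) := heq

/-- **Massart's finite class lemma.** For a finite nonempty class `F` of
functions into `[0,1]` and a fixed sample of `m` points, the empirical Rademacher
complexity (with the `2/m` normalization) is at most `2√(2 log |F| / m)`. -/
theorem massart_finite_class
    {Z : Type*} (m : ℕ) (hm : 0 < m) (S : Fin m → Z)
    (F : Finset (Z → ℝ)) (hF : F.Nonempty)
    (hb : ∀ f ∈ F, ∀ z, f z ∈ Set.Icc (0 : ℝ) 1) :
    (1 / 2 ^ m : ℝ) * ∑ σ : Fin m → Bool,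
        (F.sup' hF fun f => (2 / m : ℝ) * ∑ t, (if σ t then (1 : ℝ) else -1) * f (S t)) ≤
      2 * Real.sqrt (2 * Real.log F.card / m) := by
  classical
  have hmR : (0 : ℝ) < m := by exact_mod_cast hm
  have hc : (0 : ℝ) ≤ 2 / m := by positivity
  have hsup : ∀ σ : Fin m → Bool,
      (F.sup' hF fun f => (2 / m : ℝ) * ∑ t, (if σ t then (1 : ℝ) else -1) * f (S t)) =
      (2 / m : ℝ) * F.sup' hF fun f => ∑ t, (if σ t then (1 : ℝ) else -1) * f (S t) := by
    intro σ
    exact (Finset.comp_sup'_eq_sup'_comp hF (fun x : ℝ => (2 / m : ℝ) * x)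
      (fun x y => mul_max_of_nonneg x y hc)).symm
  rw [Fintype.sum_congr _ _ hsup, ← Finset.mul_sum, show
      (1 / 2 ^ m : ℝ) * ((2 / m : ℝ) * ∑ σ : Fin m → Bool,
        (F.sup' hF fun f => ∑ t, (if σ t then (1 : ℝ) else -1) * f (S t))) =
      (2 / m : ℝ) * ((1 / 2 ^ m : ℝ) * ∑ σ : Fin m → Bool,
        (F.sup' hF fun f => ∑ t, (if σ t then (1 : ℝ) else -1) * f (S t))) by ring]
  have hkey := key_bound m hm S F hF hb
  have hlog : 0 ≤ Real.log F.card := by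
    have : (1 : ℝ) ≤ F.card := by exact_mod_cast Finset.card_pos.mpr hF
    exact Real.log_nonneg this
  have hrhs : 2 * Real.sqrt (2 * Real.log F.card / m) =
      (2 / m : ℝ) * Real.sqrt (2 * m * Real.log F.card) := by
    rw [show (2 * (m : ℝ) * Real.log F.card) = m ^ 2 * (2 * Real.log F.card / m) by
      field_simp, Real.sqrt_mul (by positivity), Real.sqrt_sq hmR.le]
    field_simp
  rw [hrhs]
  exact mul_le_mul_of_nonneg_left hkey hc
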